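/- Let d ≥ 2 be an integer, c ∈ ℚ, and φ(z) = z^d + c. Suppose there exists a prime p with v_p(c) < 0 and d ∤ v_p(c) (a Type I prime for φ). Then φ has no preperiodic points in ℚ: for every α ∈ ℚ and all natural numbers i ≠ j, φ^[i](α) ≠ φ^[j](α). -/

import Mathlib

theorem typeI_prime_implies_no_preperiodic (d : ℕ) (hd : 2 ≤ d) (c : ℚ)
    (p : ℕ) (hp : p.Prime) (hneg : padicValRat p c < 0)
    (hnd : ¬ (d : ℤ) ∣ padicValRat p c) :
    ∀ α : ℚ, ∀ i j : ℕ, i ≠ j →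
      (fun z : ℚ => z ^ d + c)^[i] α ≠ (fun z : ℚ => z ^ d + c)^[j] α := by
  haveI : Fact p.Prime := ⟨hp⟩
  set v : ℚ → ℤ := padicValRat p with hv
  have hc0 : c ≠ 0 := by
    intro h; rw [h] at hneg; simp [hv, padicValRat.zero] at hneg
  set f : ℚ → ℚ := fun z => z ^ d + c with hf
  have hd2 : (2:ℤ) ≤ (d:ℤ) := by exact_mod_cast hd
  -- valuation of a power
  have hpow : ∀ γ : ℚ, γ ≠ 0 → v (γ ^ d) = (d:ℤ) * v γ := by
    intro γ hγ; exact padicValRat.pow γ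
  -- step lemma when valuations of γ^d and c differ
  have hsum : ∀ γ : ℚ, γ ≠ 0 → v (γ ^ d) ≠ v c →
      f γ ≠ 0 ∧ v (f γ) = min (v (γ ^ d)) (v c) := by
    intro γ hγ hne
    have hγd : γ ^ d ≠ 0 := pow_ne_zero _ hγ
    have hne0 : γ ^ d + c ≠ 0 := by
      intro h
      have : c = -(γ ^ d) := by linarith [h]
      apply hne
      rw [this]
      exact (padicValRat.neg _).symm
    exact ⟨hne0, padicValRat.add_eq_min hne0 hγd hc0 hne⟩
  -- first iterate: v (f α) ≤ v c and f α ≠ 0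
  have step1 : ∀ α : ℚ, f α ≠ 0 ∧ v (f α) ≤ v c := by
    intro α
    by_cases hα : α = 0
    · subst hα
      have : f 0 = c := by
        simp [hf, zero_pow (by omega : d ≠ 0)]
      rw [this]
      exact ⟨hc0, le_refl _⟩
    · have hne : v (α ^ d) ≠ v c := by
        rw [hpow α hα]; intro h; exact hnd ⟨v α, h.symm⟩
      obtain ⟨h1, h2⟩ := hsum α hα hne
      exact ⟨h1, h2.le.trans (min_le_right _ _)⟩
  -- step for γ with v γ < v c : v (f γ) = d * v γ < v γ
  have step2 : ∀ γ : ℚ, γ ≠ 0 → v γ < v c →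
      f γ ≠ 0 ∧ v (f γ) = (d:ℤ) * v γ := by
    intro γ hγ hlt
    have hvγ : v γ < 0 := lt_trans hlt hneg
    have hlt2 : v (γ ^ d) < v c := by
      rw [hpow γ hγ]; nlinarith
    obtain ⟨h1, h2⟩ := hsum γ hγ hlt2.ne
    exact ⟨h1, by rw [h2, min_eq_left hlt2.le, hpow γ hγ]⟩
  -- second iterate: v (f (f α)) < v c and nonzero
  have step12 : ∀ α : ℚ, f (f α) ≠ 0 ∧ v (f (f α)) < v c := by
    intro α
    obtain ⟨h1, h2⟩ := step1 α
    have hvβ : v (f α) < 0 := lt_of_le_of_lt h2 hneg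
    have hne : v ((f α) ^ d) < v c := by
      rw [hpow _ h1]; nlinarith
    obtain ⟨h3, h4⟩ := hsum (f α) h1 hne.ne
    refine ⟨h3, ?_⟩
    rw [h4]; exact lt_of_le_of_lt (min_le_left _ _) (by rwa [hpow _ h1] at hne ⊢)
  -- invariant for all iterates from index 2
  have inv : ∀ α : ℚ, ∀ n : ℕ, f^[n + 2] α ≠ 0 ∧ v (f^[n + 2] α) < v c := by
    intro α n
    induction n with
    | zero => simpa [Function.iterate_succ_apply'] using step12 α
    | succ k ih =>
      obtain ⟨h1, h2⟩ := ih
      obtain ⟨h3, h4⟩ := step2 _ h1 h2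
      have : f^[k + 1 + 2] α = f (f^[k + 2] α) := by
        rw [show k + 1 + 2 = (k + 2) + 1 by ring, Function.iterate_succ_apply']
      rw [this]
      have hvγ : v (f^[k+2] α) < 0 := lt_trans h2 hneg
      exact ⟨h3, by rw [h4]; nlinarith⟩
  -- strict decrease of valuations from index 2
  have decr : ∀ α : ℚ, StrictAnti (fun n => v (f^[n + 2] α)) := by
    intro α
    apply strictAnti_nat_of_succ_lt
    intro n
    obtain ⟨h1, h2⟩ := inv α n
    obtain ⟨h3, h4⟩ := step2 _ h1 h2
    have : f^[n + 1 + 2] α = f (f^[n + 2] α) := by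
      rw [show n + 1 + 2 = (n + 2) + 1 by ring, Function.iterate_succ_apply']
    rw [this, h4]
    have hvγ : v (f^[n+2] α) < 0 := lt_trans h2 hneg
    nlinarith
  intro α i j hij heq
  have key : ∀ k : ℕ, f^[i + 2] α ≠ f^[j + 2] α → False := by
    intro _ h
    exact h (by rw [show i + 2 = 2 + i by ring, show j + 2 = 2 + j by ring,
      Function.iterate_add_apply, Function.iterate_add_apply, heq])
  apply key 0
  intro h
  have := (decr α).injective (congrArg v h)
  omega
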